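/- Let H = H_{[0,N]} be a Jacobi matrix with eigenvalues λ_0 < λ_1 < ... < λ_N, and let P̂_k be the orthonormal polynomials defined by b_k P̂_{k+1}(x) = (x − a_k) P̂_k(x) − b_{k−1} P̂_{k−1}(x), P̂_{−1}=0, P̂_0=1, b_{−1}=b_N=1. Then there exist φ ∈ ℝ and T > 0 with e^{iφ} e^{iTH} e_0 = e_N (perfect state transfer from the first to the last standard basis vector) if and only if (i) e^{i(Tλ_k + φ)} = (−1)^{N+k} for all k, and (ii) P̂_N(λ_k) = (−1)^{N+k} for all k. -/

import Mathlib

open Polynomial Matrix NormedSpace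

/-- The `(N+1) × (N+1)` Jacobi matrix with diagonal `a` and off-diagonal `b`. -/
def jacobiMatrix (N : ℕ) (a b : ℕ → ℝ) : Matrix (Fin (N + 1)) (Fin (N + 1)) ℝ :=
  Matrix.of fun i j =>
    if (i : ℕ) = (j : ℕ) then a i
    else if (i : ℕ) + 1 = (j : ℕ) then b i
    else if (j : ℕ) + 1 = (i : ℕ) then b j
    else 0

/-- The orthonormal polynomials `P̂_k` of the Jacobi matrix:
    `P̂_{-1} = 0`, `P̂_0 = 1`, `b_k P̂_{k+1}(x) = (x - a_k) P̂_k(x) - b_{k-1} P̂_{k-1}(x)`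
    with `b_{-1} = 1`. -/
noncomputable def phat (a b : ℕ → ℝ) : ℕ → Polynomial ℝ
  | 0 => 1
  | 1 => C (b 0)⁻¹ * (X - C (a 0))
  | (k + 2) => C (b (k + 1))⁻¹ *
      ((X - C (a (k + 1))) * phat a b (k + 1) - C (b k) * phat a b k)

section Aux
variable (a b : ℕ → ℝ)

lemma phat_zero : phat a b 0 = 1 := rfl
lemma phat_one : phat a b 1 = C (b 0)⁻¹ * (X - C (a 0)) := rfl
lemma phat_succ_succ (k : ℕ) : phat a b (k + 2) = C (b (k + 1))⁻¹ *
    ((X - C (a (k + 1))) * phat a b (k + 1) - C (b k) * phat a b k) := rfl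

lemma phat_rec_one (hb : b 0 ≠ 0) : C (b 0) * phat a b 1 = X - C (a 0) := by
  rw [phat_one, ← mul_assoc, ← C_mul, mul_inv_cancel₀ hb, C_1, one_mul]

lemma phat_rec (k : ℕ) (hb : b (k + 1) ≠ 0) :
    C (b (k + 1)) * phat a b (k + 2) =
      (X - C (a (k + 1))) * phat a b (k + 1) - C (b k) * phat a b k := by
  rw [phat_succ_succ, ← mul_assoc, ← C_mul, mul_inv_cancel₀ hb, C_1, one_mul]

lemma phat_congr (b' : ℕ → ℝ) : ∀ n, (∀ j, j < n → b j = b' j) → phat a b n = phat a b' n := by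
  intro n
  induction n using Nat.strong_induction_on with
  | _ n ih =>
    match n with
    | 0 => intro _; rfl
    | 1 => intro h; rw [phat_one, phat_one, h 0 one_pos]
    | (m + 2) =>
      intro h
      rw [phat_succ_succ, phat_succ_succ, h (m + 1) (by omega), h m (by omega),
        ih (m + 1) (by omega) (fun j hj => h j (by omega)),
        ih m (by omega) (fun j hj => h j (by omega))]

lemma phat_deg (hb : ∀ j, b j ≠ 0) :
    ∀ n, (phat a b n).degree = (n : ℕ) ∧
      (phat a b n).leadingCoeff = ∏ j ∈ Finset.range n, (b j)⁻¹ := by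
  have key : ∀ n, ((phat a b n).degree = (n : ℕ) ∧
      (phat a b n).leadingCoeff = ∏ j ∈ Finset.range n, (b j)⁻¹) ∧
      ((phat a b (n + 1)).degree = ((n + 1 : ℕ) : WithBot ℕ) ∧
      (phat a b (n + 1)).leadingCoeff = ∏ j ∈ Finset.range (n + 1), (b j)⁻¹) := by
    intro n
    induction n with
    | zero =>
      refine ⟨⟨by simp [phat_zero], by simp [phat_zero]⟩, ?_, ?_⟩
      · rw [phat_one, degree_mul, degree_C (inv_ne_zero (hb 0)), degree_X_sub_C]
        rfl
      · rw [phat_one, leadingCoeff_mul, leadingCoeff_C, (monic_X_sub_C _).leadingCoeff]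
        simp
    | succ m ih =>
      obtain ⟨ih0, hdeg, hlead⟩ := ih
      refine ⟨⟨hdeg, hlead⟩, ?_⟩
      have hp1 : phat a b (m + 1) ≠ 0 := by
        intro h0
        rw [h0, degree_zero] at hdeg
        exact (by simp : ((m + 1 : ℕ) : WithBot ℕ) ≠ ⊥) hdeg.symm
      have hq : ((X - C (a (m + 1))) * phat a b (m + 1)).degree = ((m + 2 : ℕ) : WithBot ℕ) := by
        rw [degree_mul, degree_X_sub_C, hdeg]
        push_cast; ring
      have hqlead : ((X - C (a (m + 1))) * phat a b (m + 1)).leadingCoeff =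
          ∏ j ∈ Finset.range (m + 1), (b j)⁻¹ := by
        rw [leadingCoeff_mul, (monic_X_sub_C _).leadingCoeff, one_mul, hlead]
      have hlow : (C (b m) * phat a b m).degree < ((m + 2 : ℕ) : WithBot ℕ) := by
        calc (C (b m) * phat a b m).degree ≤ 0 + (m : ℕ) := by
              rw [degree_mul]
              exact add_le_add (degree_C_le) (le_of_eq ih0.1)
          _ < ((m + 2 : ℕ) : WithBot ℕ) := by
              rw [zero_add]; exact_mod_cast by omega
      have hsubdeg : ((X - C (a (m + 1))) * phat a b (m + 1) - C (b m) * phat a b m).degree =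
          ((m + 2 : ℕ) : WithBot ℕ) := by
        rw [degree_sub_eq_left_of_degree_lt (by rw [hq]; exact hlow), hq]
      have hsublead : ((X - C (a (m + 1))) * phat a b (m + 1) -
          C (b m) * phat a b m).leadingCoeff = ∏ j ∈ Finset.range (m + 1), (b j)⁻¹ := by
        rw [← hqlead]
        exact leadingCoeff_sub_of_degree_lt (by rw [hq]; exact hlow)
      constructor
      · rw [phat_succ_succ, degree_mul, degree_C (inv_ne_zero (hb (m + 1))), hsubdeg, zero_add]
      · rw [phat_succ_succ, leadingCoeff_mul, leadingCoeff_C, hsublead,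
          Finset.prod_range_succ (fun j => (b j)⁻¹) (m + 1)]
        exact mul_comm _ _
  exact fun n => (key n).1

lemma phat_cd (hb : ∀ j, b j ≠ 0) : ∀ n,
    C (b n) * (derivative (phat a b (n + 1)) * phat a b n -
      derivative (phat a b n) * phat a b (n + 1)) =
      ∑ j ∈ Finset.range (n + 1), (phat a b j) ^ 2 := by
  intro n
  induction n with
  | zero =>
    have h1 : (C (b 0) : ℝ[X]) * C (b 0)⁻¹ = 1 := by
      rw [← C_mul, mul_inv_cancel₀ (hb 0), C_1]
    rw [Finset.sum_range_one, phat_zero, one_pow, phat_one]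
    simp only [derivative_one, derivative_mul, derivative_C, derivative_sub, derivative_X,
      zero_mul, sub_zero, zero_add, mul_one, zero_sub]
    linear_combination h1
  | succ m ih =>
    have hrec := phat_rec a b m (hb (m + 1))
    have hrec' := congrArg derivative hrec
    rw [derivative_C_mul, derivative_sub, derivative_mul, derivative_mul, derivative_sub,
      derivative_X, derivative_C, derivative_C, sub_zero, one_mul, zero_mul, zero_add] at hrec'
    rw [Finset.sum_range_succ, ← ih]
    have expand : C (b (m + 1)) * (derivative (phat a b (m + 2)) * phat a b (m + 1) -
        derivative (phat a b (m + 1)) * phat a b (m + 2)) =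
        (C (b (m + 1)) * derivative (phat a b (m + 2))) * phat a b (m + 1) -
        derivative (phat a b (m + 1)) * (C (b (m + 1)) * phat a b (m + 2)) := by ring
    rw [expand, hrec', hrec]
    ring
end Aux

noncomputable def padw (N : ℕ) (w : Fin (N + 1) → ℝ) : ℕ → ℝ :=
  fun n => if h : n < N + 1 then w ⟨n, h⟩ else 0

lemma jacobi_mulVec (N : ℕ) (a b : ℕ → ℝ) (w : Fin (N + 1) → ℝ) (i : Fin (N + 1)) :
    (jacobiMatrix N a b).mulVec w i =
      (if (i : ℕ) = 0 then 0 else b ((i : ℕ) - 1) * padw N w ((i : ℕ) - 1))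
        + a (i : ℕ) * padw N w (i : ℕ) + b (i : ℕ) * padw N w ((i : ℕ) + 1) := by
  classical
  set g : ℕ → ℝ := fun n =>
    (if (i : ℕ) = n then a (i : ℕ) else if (i : ℕ) + 1 = n then b (i : ℕ)
      else if n + 1 = (i : ℕ) then b n else 0) * padw N w n with hg
  have h1 : (jacobiMatrix N a b).mulVec w i = ∑ n ∈ Finset.range (N + 1), g n := by
    rw [← Fin.sum_univ_eq_sum_range]
    simp only [Matrix.mulVec, dotProduct]
    refine Finset.sum_congr rfl fun j _ => ?_
    simp only [hg, jacobiMatrix, Matrix.of_apply, padw, j.isLt, dif_pos, Fin.eta]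
  have h2 : ∑ n ∈ Finset.range (N + 1), g n = ∑ n ∈ Finset.range (N + 2), g n := by
    refine (Finset.sum_subset (Finset.range_subset_range.mpr (by omega)) fun x _ hx => ?_)
    have hx' : x = N + 1 := by
      simp only [Finset.mem_range] at *; omega
    simp [hg, hx', padw]
  have h3 : ∀ n, g n = (if (i : ℕ) = n then a (i : ℕ) * padw N w n else 0)
      + (if (i : ℕ) + 1 = n then b (i : ℕ) * padw N w n else 0)
      + (if n + 1 = (i : ℕ) then b n * padw N w n else 0) := by
    intro n
    simp only [hg]
    split_ifs <;> first | ring1 | (exfalso; omega)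
  rw [h1, h2, Finset.sum_congr rfl fun n _ => h3 n, Finset.sum_add_distrib,
    Finset.sum_add_distrib, Finset.sum_ite_eq, Finset.sum_ite_eq,
    if_pos (Finset.mem_range.mpr (by omega : (i : ℕ) < N + 2)),
    if_pos (Finset.mem_range.mpr (by omega : (i : ℕ) + 1 < N + 2))]
  have h4 : ∑ n ∈ Finset.range (N + 2), (if n + 1 = (i : ℕ) then b n * padw N w n else 0)
      = if (i : ℕ) = 0 then 0 else b ((i : ℕ) - 1) * padw N w ((i : ℕ) - 1) := by
    by_cases hi0 : (i : ℕ) = 0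
    · rw [if_pos hi0]
      exact Finset.sum_eq_zero fun n _ => if_neg (by omega)
    · rw [if_neg hi0]
      rw [Finset.sum_congr rfl fun n _ => if_congr (show (n + 1 = (i : ℕ)) ↔ ((i : ℕ) - 1 = n)
        by omega) rfl rfl, Finset.sum_ite_eq,
        if_pos (Finset.mem_range.mpr (by omega : (i : ℕ) - 1 < N + 2))]
  rw [h4]; ring

lemma padw_eq (N : ℕ) (a b : ℕ → ℝ) (hb : ∀ j, b j ≠ 0) {lam0 : ℝ} {w : Fin (N + 1) → ℝ}
    (hw : (jacobiMatrix N a b).mulVec w = lam0 • w) :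
    ∀ n, n ≤ N + 1 → padw N w n = padw N w 0 * (phat a b n).eval lam0 := by
  intro n
  induction n using Nat.strong_induction_on with
  | _ n ih =>
    match n with
    | 0 => intro _; simp [phat_zero]
    | 1 =>
      intro h1
      have hrow := congrFun hw ⟨0, by omega⟩
      rw [jacobi_mulVec] at hrow
      simp only [Pi.smul_apply, smul_eq_mul] at hrow
      have hw0 : w ⟨0, by omega⟩ = padw N w 0 := by simp [padw]
      rw [hw0] at hrow
      simp only [if_pos rfl, if_true, zero_add] at hrow
      rw [phat_one]
      simp only [eval_mul, eval_C, eval_sub, eval_X]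
      field_simp [hb 0]
      linear_combination hrow
    | (m + 2) =>
      intro h2
      have hrow := congrFun hw ⟨m + 1, by omega⟩
      rw [jacobi_mulVec] at hrow
      simp only [Pi.smul_apply, smul_eq_mul] at hrow
      have hwm1 : w ⟨m + 1, by omega⟩ = padw N w (m + 1) := by
        simp [padw, show m < N from by omega]
      rw [hwm1] at hrow
      rw [if_neg (by omega : ¬(m + 1 = 0))] at hrow
      simp only [Nat.add_sub_cancel] at hrow
      have ihm := ih m (by omega) (by omega)
      have ihm1 := ih (m + 1) (by omega) (by omega)
      rw [ihm, ihm1] at hrow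
      rw [phat_succ_succ]
      simp only [eval_mul, eval_C, eval_sub, eval_X]
      field_simp [hb (m + 1)]
      linear_combination hrow

lemma jacobi_eigen (N : ℕ) (a b : ℕ → ℝ) (hb : ∀ j, b j ≠ 0)
    (lam : Fin (N + 1) → ℝ)
    (heig : (jacobiMatrix N a b).charpoly = ∏ i : Fin (N + 1), (X - C (lam i)))
    (k : Fin (N + 1)) :
    (jacobiMatrix N a b).mulVec (fun j : Fin (N + 1) => (phat a b (j : ℕ)).eval (lam k)) =
      lam k • (fun j : Fin (N + 1) => (phat a b (j : ℕ)).eval (lam k)) ∧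
      (phat a b (N + 1)).eval (lam k) = 0 := by
  classical
  have hev : ((jacobiMatrix N a b).charpoly).eval (lam k) = 0 := by
    rw [heig, eval_prod]
    exact Finset.prod_eq_zero (Finset.mem_univ k) (by simp)
  have hdet : ((Matrix.scalar (Fin (N + 1))) (lam k) - jacobiMatrix N a b).det = 0 := by
    rw [Matrix.charpoly, eval_det, Matrix.matPolyEquiv_charmatrix] at hev
    simpa using hev
  obtain ⟨w, hw0, hww⟩ := Matrix.exists_mulVec_eq_zero_iff.mpr hdet
  have hw : (jacobiMatrix N a b).mulVec w = lam k • w := by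
    rw [Matrix.sub_mulVec] at hww
    have hscal : (Matrix.scalar (Fin (N + 1))) (lam k) *ᵥ w = lam k • w := by
      funext i
      rw [Matrix.scalar_apply, Matrix.mulVec_diagonal]
      rfl
    rw [hscal] at hww
    have := sub_eq_zero.mp hww
    exact this.symm
  have hkey := padw_eq N a b hb hw
  have hw00 : padw N w 0 ≠ 0 := by
    intro h0
    apply hw0
    funext j
    have hj := hkey (j : ℕ) (by omega)
    rw [h0, zero_mul] at hj
    have : padw N w (j : ℕ) = w j := by simp [padw, j.isLt]
    rw [this] at hj
    exact hj
  have hvw : (fun j : Fin (N + 1) => (phat a b (j : ℕ)).eval (lam k)) = (padw N w 0)⁻¹ • w := by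
    funext j
    have hj := hkey (j : ℕ) (by omega)
    have hpw : padw N w (j : ℕ) = w j := by simp [padw, j.isLt]
    rw [hpw] at hj
    simp only [Pi.smul_apply, smul_eq_mul]
    rw [hj]
    field_simp
  constructor
  · rw [hvw, Matrix.mulVec_smul, hw, smul_comm]
  · have hN1 := hkey (N + 1) le_rfl
    have : padw N w (N + 1) = 0 := by simp [padw]
    rw [this] at hN1
    rcases mul_eq_zero.mp hN1.symm with h | h
    · exact absurd h hw00
    · exact h

lemma phat_sign (N : ℕ) (a b : ℕ → ℝ) (hb : ∀ j, 0 < b j) (hbN : b N = 1)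
    (lam : Fin (N + 1) → ℝ) (hmono : StrictMono lam)
    (hroots : ∀ k, (phat a b (N + 1)).eval (lam k) = 0) (k : Fin (N + 1)) :
    0 < (-1 : ℝ) ^ (N + (k : ℕ)) * (phat a b N).eval (lam k) := by
  classical
  have hk := k.isLt
  have hbne : ∀ j, b j ≠ 0 := fun j => (hb j).ne'
  set c := ∏ j ∈ Finset.range (N + 1), (b j)⁻¹ with hcdef
  have hc : 0 < c := Finset.prod_pos fun j _ => inv_pos.mpr (hb j)
  have hdeg := (phat_deg a b hbne (N + 1)).1
  have hlead := (phat_deg a b hbne (N + 1)).2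
  have hdeg2 : (C c * Lagrange.nodal Finset.univ lam).degree = ((N + 1 : ℕ) : WithBot ℕ) := by
    rw [degree_mul, degree_C hc.ne', Lagrange.degree_nodal, zero_add]
    simp
  have hlead2 : (C c * Lagrange.nodal Finset.univ lam).leadingCoeff = c := by
    rw [leadingCoeff_mul, leadingCoeff_C, Lagrange.nodal_monic.leadingCoeff, mul_one]
  have hpne : phat a b (N + 1) ≠ 0 := by
    intro h0
    rw [h0, degree_zero] at hdeg
    exact (by simp : ((N + 1 : ℕ) : WithBot ℕ) ≠ ⊥) hdeg.symm
  have hnodal : phat a b (N + 1) = C c * Lagrange.nodal Finset.univ lam := by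
    set q := phat a b (N + 1) - C c * Lagrange.nodal Finset.univ lam with hq
    have hqz : q = 0 := by
      by_cases h0 : q = 0
      · exact h0
      refine Polynomial.eq_zero_of_natDegree_lt_card_of_eval_eq_zero q hmono.injective
        (fun i => ?_) ?_
      · rw [hq]
        simp [eval_sub, hroots i, Lagrange.eval_nodal_at_node (Finset.mem_univ i)]
      · have hlt : q.degree < ((N + 1 : ℕ) : WithBot ℕ) := by
          rw [hq, ← hdeg]
          exact degree_sub_lt (hdeg.trans hdeg2.symm) hpne (hlead.trans hlead2.symm)
        have := (Polynomial.natDegree_lt_iff_degree_lt h0).mpr (by rw [← hdeg] at hlt ⊢; exact hlt)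
        simpa using (Polynomial.natDegree_lt_iff_degree_lt h0).mpr hlt
    have := sub_eq_zero.mp hqz
    exact this
  -- evaluate Christoffel-Darboux at lam k
  have hcd := congrArg (eval (lam k)) (phat_cd a b hbne N)
  simp only [eval_mul, eval_C, eval_sub, eval_finset_sum, eval_pow] at hcd
  rw [hroots k, hbN, one_mul, mul_zero, sub_zero] at hcd
  have hpos : (0 : ℝ) < ∑ j ∈ Finset.range (N + 1), ((phat a b j).eval (lam k)) ^ 2 := by
    refine Finset.sum_pos' (fun j _ => sq_nonneg _) ⟨0, Finset.mem_range.mpr (by omega), ?_⟩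
    simp [phat_zero]
  have hder : (derivative (phat a b (N + 1))).eval (lam k) =
      c * ∏ j ∈ Finset.univ.erase k, (lam k - lam j) := by
    rw [hnodal, derivative_mul, derivative_C, zero_mul, zero_add, eval_mul, eval_C,
      Lagrange.eval_nodal_derivative_eval_node_eq (Finset.mem_univ k), Lagrange.eval_nodal]
  have hsplit : Finset.univ.erase k = Finset.Iio k ∪ Finset.Ioi k := by
    ext j
    simp only [Finset.mem_erase, Finset.mem_union, Finset.mem_Iio, Finset.mem_Ioi,
      Finset.mem_univ, and_true]
    exact ne_iff_lt_or_gt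
  have hdisj : Disjoint (Finset.Iio k) (Finset.Ioi k) :=
    Finset.disjoint_left.mpr fun j hj hj' =>
      lt_asymm (Finset.mem_Iio.mp hj) (Finset.mem_Ioi.mp hj')
  have hIoi : ∏ j ∈ Finset.Ioi k, (lam k - lam j)
      = (-1 : ℝ) ^ (N - (k : ℕ)) * ∏ j ∈ Finset.Ioi k, (lam j - lam k) := by
    calc ∏ j ∈ Finset.Ioi k, (lam k - lam j)
        = ∏ j ∈ Finset.Ioi k, (-1) * (lam j - lam k) :=
          Finset.prod_congr rfl fun j _ => by ring
      _ = (-1 : ℝ) ^ (Finset.Ioi k).card * ∏ j ∈ Finset.Ioi k, (lam j - lam k) := by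
          rw [Finset.prod_mul_distrib, Finset.prod_const]
      _ = _ := by rw [Fin.card_Ioi, show N + 1 - 1 - (k : ℕ) = N - (k : ℕ) from by omega]
  have hIiopos : 0 < ∏ j ∈ Finset.Iio k, (lam k - lam j) :=
    Finset.prod_pos fun j hj => sub_pos.mpr (hmono (Finset.mem_Iio.mp hj))
  have hIoipos : 0 < ∏ j ∈ Finset.Ioi k, (lam j - lam k) :=
    Finset.prod_pos fun j hj => sub_pos.mpr (hmono (Finset.mem_Ioi.mp hj))
  have hone : (-1 : ℝ) ^ (N + (k : ℕ)) * (-1 : ℝ) ^ (N - (k : ℕ)) = 1 := by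
    rw [← pow_add, show N + (k : ℕ) + (N - (k : ℕ)) = 2 * N from by omega, pow_mul]
    norm_num
  have hDsign : 0 < (-1 : ℝ) ^ (N + (k : ℕ)) * (derivative (phat a b (N + 1))).eval (lam k) := by
    rw [hder, hsplit, Finset.prod_union hdisj, hIoi]
    have heq : (-1 : ℝ) ^ (N + (k : ℕ)) *
        (c * ((∏ j ∈ Finset.Iio k, (lam k - lam j)) *
          ((-1 : ℝ) ^ (N - (k : ℕ)) * ∏ j ∈ Finset.Ioi k, (lam j - lam k))))
        = ((-1 : ℝ) ^ (N + (k : ℕ)) * (-1 : ℝ) ^ (N - (k : ℕ))) *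
          (c * ((∏ j ∈ Finset.Iio k, (lam k - lam j)) *
            (∏ j ∈ Finset.Ioi k, (lam j - lam k)))) := by ring
    rw [heq, hone, one_mul]
    exact mul_pos hc (mul_pos hIiopos hIoipos)
  have h3 : 0 < ((derivative (phat a b (N + 1))).eval (lam k)) ^ 2 *
      ((-1 : ℝ) ^ (N + (k : ℕ)) * (phat a b N).eval (lam k)) := by
    have := mul_pos hDsign (hcd ▸ hpos : (0:ℝ) < (derivative (phat a b (N + 1))).eval (lam k) *
      (phat a b N).eval (lam k))
    calc (0:ℝ) < ((-1 : ℝ) ^ (N + (k : ℕ)) * (derivative (phat a b (N + 1))).eval (lam k)) *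
        ((derivative (phat a b (N + 1))).eval (lam k) * (phat a b N).eval (lam k)) := this
      _ = _ := by ring
  rcases mul_pos_iff.mp h3 with ⟨-, h⟩ | ⟨h, -⟩
  · exact h
  · linarith [sq_nonneg ((derivative (phat a b (N + 1))).eval (lam k))]

lemma jacobiMatrix_congr (N : ℕ) (a b b' : ℕ → ℝ) (h : ∀ j, j < N → b j = b' j) :
    jacobiMatrix N a b = jacobiMatrix N a b' := by
  ext i j
  have hi := i.isLt
  have hj := j.isLt
  simp only [jacobiMatrix, Matrix.of_apply]
  split_ifs with h1 h2 h3
  · rfl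
  · rw [h (i : ℕ) (by omega)]
  · rw [h (j : ℕ) (by omega)]
  · rfl

lemma jacobiMatrix_symm (N : ℕ) (a b : ℕ → ℝ) :
    (jacobiMatrix N a b)ᵀ = jacobiMatrix N a b := by
  ext i j
  simp only [Matrix.transpose_apply, jacobiMatrix, Matrix.of_apply]
  split_ifs <;>
    first
      | rfl
      | (exact congrArg a (by omega))
      | (exact congrArg b (by omega))
      | (exfalso; omega)

/-- **Characterization of perfect quantum state transfer.** For a Jacobi matrix `H`
    with eigenvalues `λ_0 < ... < λ_N` and `φ ∈ ℝ`, `T > 0`, the perfect state transfer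
    condition `e^{iφ} e^{iTH} e_0 = e_N` holds iff
    (i) `e^{i(Tλ_k + φ)} = (-1)^{N+k}` for all `k`, and
    (ii) `P̂_N(λ_k) = (-1)^{N+k}` for all `k`. -/
theorem stmt_17 (N : ℕ) (a b : ℕ → ℝ)
    (hb : ∀ j < N, 0 < b j) (hbN : b N = 1)
    (lam : Fin (N + 1) → ℝ) (hmono : StrictMono lam)
    (heig : (jacobiMatrix N a b).charpoly = ∏ i : Fin (N + 1), (X - C (lam i)))
    (φ T : ℝ) (hT : 0 < T) :
    (Complex.exp (φ * Complex.I) •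
        exp ((T * Complex.I) •
          ((jacobiMatrix N a b).map (fun x => (x : ℂ))))).mulVec
        (Pi.single 0 1) = Pi.single (Fin.last N) 1 ↔
      ((∀ k : Fin (N + 1),
          Complex.exp ((T * lam k + φ) * Complex.I) = (-1) ^ (N + (k : ℕ))) ∧
        (∀ k : Fin (N + 1),
          (phat a b N).eval (lam k) = (-1) ^ (N + (k : ℕ)))) := by
  classical
  set b' : ℕ → ℝ := fun j => if j ≤ N then b j else 1 with hb'def
  have hbeq : ∀ j, j ≤ N → b j = b' j := fun j hj => by simp [hb'def, hj]
  have hb' : ∀ j, 0 < b' j := by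
    intro j
    by_cases h : j ≤ N
    · rw [← hbeq j h]
      rcases lt_or_eq_of_le h with h' | h'
      · exact hb j h'
      · rw [h', hbN]; norm_num
    · simp [hb'def, h]
  have hbne' : ∀ j, b' j ≠ 0 := fun j => (hb' j).ne'
  have hbN' : b' N = 1 := by rw [← hbeq N le_rfl, hbN]
  have hmat : jacobiMatrix N a b = jacobiMatrix N a b' :=
    jacobiMatrix_congr N a b b' (fun j hj => hbeq j (by omega))
  have hphatN : phat a b N = phat a b' N :=
    phat_congr a b b' N (fun j hj => hbeq j (by omega))
  rw [hmat, hphatN]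
  set H := jacobiMatrix N a b' with hH
  set v : Fin (N + 1) → Fin (N + 1) → ℝ := fun k j => (phat a b' (j : ℕ)).eval (lam k) with hv
  have heig' : H.charpoly = ∏ i : Fin (N + 1), (X - C (lam i)) := hmat ▸ heig
  have heigen : ∀ k, H.mulVec (v k) = lam k • v k ∧ (phat a b' (N + 1)).eval (lam k) = 0 :=
    fun k => jacobi_eigen N a b' hbne' lam heig' k
  set P : Matrix (Fin (N + 1)) (Fin (N + 1)) ℝ := Matrix.of (fun i k => v k i) with hP
  have hPunit : IsUnit P := by
    rw [← Matrix.linearIndependent_cols_iff_isUnit]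
    have hcols : P.col = v := by funext k i; rfl
    rw [hcols]
    refine Module.End.eigenvectors_linearIndependent' (Matrix.mulVecLin H) lam hmono.injective v
      (fun k => ⟨?_, ?_⟩)
    · rw [Module.End.mem_eigenspace_iff, Matrix.mulVecLin_apply]
      exact (heigen k).1
    · intro h0
      have h1 := congrFun h0 0
      simp only [hv, Pi.zero_apply] at h1
      rw [show ((0 : Fin (N + 1)) : ℕ) = 0 from rfl, phat_zero, eval_one] at h1
      exact one_ne_zero h1
  have hPdet : IsUnit P.det := (Matrix.isUnit_iff_isUnit_det P).mp hPunit
  set Pc : Matrix (Fin (N + 1)) (Fin (N + 1)) ℂ := P.map (fun x => (x : ℂ)) with hPc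
  have hPcdet : IsUnit Pc.det := by
    have h1 : Pc = (Complex.ofRealHom).mapMatrix P := rfl
    have h2 : Pc.det = ((P.det : ℝ) : ℂ) := by rw [h1, ← RingHom.map_det]; rfl
    rw [h2, isUnit_iff_ne_zero]
    simpa using isUnit_iff_ne_zero.mp ((Matrix.isUnit_iff_isUnit_det P).mp hPunit)
  have hPcunit : IsUnit Pc := (Matrix.isUnit_iff_isUnit_det Pc).mpr hPcdet
  have hHP : H * P = P * Matrix.diagonal lam := by
    ext i k
    rw [Matrix.mul_diagonal]
    have h1 : (H * P) i k = H.mulVec (v k) i := by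
      simp [Matrix.mul_apply, Matrix.mulVec, dotProduct, hP]
    rw [h1, (heigen k).1]
    simp only [Pi.smul_apply, smul_eq_mul, hP, Matrix.of_apply]
    ring
  set M := ((T : ℂ) * Complex.I) • (H.map (fun x => (x : ℂ))) with hM
  set dvec : Fin (N + 1) → ℂ := fun k => (T : ℂ) * Complex.I * (lam k) with hdvec
  have h2 : H.map (fun x => (x : ℂ)) * Pc = Pc * Matrix.diagonal (fun k => ((lam k : ℝ) : ℂ)) := by
    ext i k
    rw [Matrix.mul_apply, Matrix.mul_diagonal]
    have hent : ∑ j, H i j * P j k = P i k * lam k := by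
      rw [← Matrix.mul_apply, hHP, Matrix.mul_diagonal]
    calc ∑ j, (H.map (fun x => (x : ℂ))) i j * Pc j k
        = ((∑ j, H i j * P j k : ℝ) : ℂ) := by
          push_cast [Matrix.map_apply, hPc]
          rfl
      _ = ((P i k * lam k : ℝ) : ℂ) := by rw [hent]
      _ = Pc i k * ((lam k : ℝ) : ℂ) := by push_cast [hPc, Matrix.map_apply]; rfl
  have hMPc : M * Pc = Pc * Matrix.diagonal dvec := by
    rw [hM, Matrix.smul_mul, h2, ← Matrix.mul_smul]
    congr 1
    rw [← Matrix.diagonal_smul]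
    congr 1
  have hMconj : M = Pc * Matrix.diagonal dvec * Pc⁻¹ := by
    rw [← hMPc, Matrix.mul_nonsing_inv_cancel_right _ _ hPcdet]
  have hexpM : exp M = Pc * Matrix.diagonal (fun k => Complex.exp (dvec k)) * Pc⁻¹ := by
    rw [hMconj, Matrix.exp_conj Pc (Matrix.diagonal dvec) hPcunit, Matrix.exp_diagonal]
    all_goals rw [show exp dvec = (fun k => Complex.exp (dvec k)) from
      funext fun k => by rw [Pi.coe_exp, Complex.exp_eq_exp_ℂ]]
  have hexpMP : exp M * Pc = Pc * Matrix.diagonal (fun k => Complex.exp (dvec k)) := by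
    rw [hexpM, Matrix.nonsing_inv_mul_cancel_right _ _ hPcdet]
  have hHsymm : Hᵀ = H := jacobiMatrix_symm N a b'
  have hMsymm : Mᵀ = M := by
    rw [hM, Matrix.transpose_smul, ← Matrix.transpose_map, hHsymm]
  have hexpsymm : (exp M)ᵀ = exp M := by rw [← Matrix.exp_transpose, hMsymm]
  have hPcTexp : Pcᵀ * exp M = Matrix.diagonal (fun k => Complex.exp (dvec k)) * Pcᵀ := by
    calc Pcᵀ * exp M = Pcᵀ * (exp M)ᵀ := by rw [hexpsymm]
      _ = (exp M * Pc)ᵀ := by rw [Matrix.transpose_mul]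
      _ = (Pc * Matrix.diagonal (fun k => Complex.exp (dvec k)))ᵀ := by rw [hexpMP]
      _ = (Matrix.diagonal (fun k => Complex.exp (dvec k)))ᵀ * Pcᵀ := by
          rw [Matrix.transpose_mul]
      _ = _ := by rw [Matrix.diagonal_transpose]
  have hPcTunit : IsUnit Pcᵀ := (Matrix.isUnit_transpose Pc).mpr hPcunit
  have hinj : Function.Injective (Pcᵀ.mulVec) := Matrix.mulVec_injective_iff_isUnit.mpr hPcTunit
  have hval0 : ∀ k : Fin (N + 1), Pc 0 k = 1 := by
    intro k
    simp only [hPc, Matrix.map_apply, hP, Matrix.of_apply, hv]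
    rw [show ((0 : Fin (N + 1)) : ℕ) = 0 from rfl, phat_zero, eval_one]
    norm_num
  have hvalN : ∀ k : Fin (N + 1), Pc (Fin.last N) k = (((phat a b' N).eval (lam k) : ℝ) : ℂ) := by
    intro k
    simp only [hPc, Matrix.map_apply, hP, Matrix.of_apply, hv, Fin.val_last]
  have main : (Complex.exp ((φ : ℂ) * Complex.I) • exp M) *ᵥ Pi.single 0 1 =
      Pi.single (Fin.last N) 1 ↔
      ∀ k : Fin (N + 1), Complex.exp ((φ : ℂ) * Complex.I) * Complex.exp (dvec k) =
        (((phat a b' N).eval (lam k) : ℝ) : ℂ) := by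
    rw [← hinj.eq_iff, Matrix.smul_mulVec, Matrix.mulVec_smul, Matrix.mulVec_mulVec,
      hPcTexp, ← Matrix.mulVec_mulVec, Matrix.mulVec_single, Matrix.mulVec_single, funext_iff]
    refine forall_congr' fun k => ?_
    simp only [Pi.smul_apply, Matrix.mulVec_diagonal, smul_eq_mul, mul_one,
      Matrix.col_apply, MulOpposite.op_one, one_smul, Matrix.transpose_apply, hval0, hvalN]
  rw [main]
  have hsign : ∀ k : Fin (N + 1), 0 < (-1 : ℝ) ^ (N + (k : ℕ)) * (phat a b' N).eval (lam k) :=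
    phat_sign N a b' hb' hbN' lam hmono (fun k => (heigen k).2)
  have hexpsplit : ∀ k : Fin (N + 1),
      Complex.exp (((T : ℂ) * (lam k : ℝ) + (φ : ℝ)) * Complex.I) =
      Complex.exp ((φ : ℂ) * Complex.I) * Complex.exp (dvec k) := by
    intro k
    rw [← Complex.exp_add]
    congr 1
    rw [hdvec]
    ring
  constructor
  · intro h
    have key : ∀ k : Fin (N + 1), (phat a b' N).eval (lam k) = (-1 : ℝ) ^ (N + (k : ℕ)) := by
      intro k
      have h1 := h k
      have habs : |(phat a b' N).eval (lam k)| = 1 := by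
        have hob : ‖(((phat a b' N).eval (lam k) : ℝ) : ℂ)‖ = 1 := by
          rw [← h1, norm_mul, Complex.norm_exp, Complex.norm_exp]
          simp [hdvec, Complex.mul_re]
        rwa [Complex.norm_real, Real.norm_eq_abs] at hob
      have hsk := hsign k
      rcases (abs_eq (by norm_num : (0:ℝ) ≤ 1)).mp habs with h3 | h3
      · rcases Nat.even_or_odd (N + (k : ℕ)) with hev | hod
        · rw [h3, hev.neg_one_pow]
        · rw [hod.neg_one_pow] at hsk; rw [h3] at hsk; linarith
      · rcases Nat.even_or_odd (N + (k : ℕ)) with hev | hod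
        · rw [hev.neg_one_pow] at hsk; rw [h3] at hsk; linarith
        · rw [h3, hod.neg_one_pow]
    refine ⟨fun k => ?_, key⟩
    rw [hexpsplit k, h k, key k]
    push_cast
    ring
  · rintro ⟨h1, h2⟩ k
    rw [← hexpsplit k, h1 k, h2 k]
    push_cast
    ring
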